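/- Let $N,d\in\mathbb{N}$, $c,C\in[0,\infty)$, let $A_1,\dots,A_N\in\mathbb{R}^{d\times d}$, let $\|\cdot\|$ be a norm on $\mathbb{R}^d$ with induced operator norm $|||A|||=\sup_{\|x\|\le 1}\|Ax\|$, let $\mu:\mathbb{R}^d\to\mathbb{R}^d$ satisfy $\|\mu(x)\|\le C+c\|x\|$ for all $x$, and define recursively $Y_0^{x,y}=x$ and $Y_{n+1}^{x,y}=Y_n^{x,y}+A_{n+1}\mu(Y_n^{x,y})+y_{n+1}$ for $n\in\{0,\dots,N-1\}$, $x\in\mathbb{R}^d$, $y=(y_1,\dots,y_N)\in(\mathbb{R}^d)^N$. Then for all $n\in\{0,\dots,N\}$ it holds that $\|Y_n^{x,y}\|\le\Big(\|x\|+C\sum_{k=1}^n|||A_k|||+\max_{m\in\{0,\dots,n\}}\big\|\sum_{k=1}^m y_k\big\|\Big)\exp\big(c\sum_{k=1}^n|||A_k|||\big)$. -/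

import Mathlib

set_option maxHeartbeats 1000000


theorem stmt9 (N d : ℕ) (hN : 1 ≤ N) (hd : 1 ≤ d)
    (c C : ℝ) (hc : 0 ≤ c) (hC : 0 ≤ C)
    (A : ℕ → Matrix (Fin d) (Fin d) ℝ)
    (nm : (Fin d → ℝ) → ℝ)
    (hnm0 : ∀ v, 0 ≤ nm v)
    (hnmeq0 : ∀ v, nm v = 0 → v = 0)
    (hnmadd : ∀ v w, nm (v + w) ≤ nm v + nm w)
    (hnmsmul : ∀ (t : ℝ) v, nm (t • v) = |t| * nm v)
    (op : Matrix (Fin d) (Fin d) ℝ → ℝ)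
    (hop : ∀ B, op B = sSup {s : ℝ | ∃ v, nm v ≤ 1 ∧ s = nm (B.mulVec v)})
    (μ : (Fin d → ℝ) → Fin d → ℝ)
    (hμ : ∀ v, nm (μ v) ≤ C + c * nm v)
    (Y : (Fin d → ℝ) → (ℕ → Fin d → ℝ) → ℕ → Fin d → ℝ)
    (hY0 : ∀ x y, Y x y 0 = x)
    (hYrec : ∀ x y n, n < N →
      Y x y (n+1) = Y x y n + (A (n+1)).mulVec (μ (Y x y n)) + y (n+1)) :
    ∀ x y n, n ≤ N →
      nm (Y x y n) ≤
        (nm x + C * (∑ k ∈ Finset.Icc 1 n, op (A k))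
          + (Finset.range (n+1)).sup' Finset.nonempty_range_add_one
              (fun m => nm (∑ k ∈ Finset.Icc 1 m, y k)))
        * Real.exp (c * ∑ k ∈ Finset.Icc 1 n, op (A k)) := by
  have nm_zero : nm 0 = 0 := by
    have h := hnmsmul 0 0
    simpa using h
  have nm_neg : ∀ v, nm (-v) = nm v := by
    intro v
    have h := hnmsmul (-1) v
    simpa using h
  have nm_sub : ∀ v w : Fin d → ℝ, nm v ≤ nm (v - w) + nm w := by
    intro v w
    have h := hnmadd (v - w) w
    simpa using h
  haveI : Nonempty (Fin d) := ⟨⟨0, hd⟩⟩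
  -- comparison with the sup norm: upper bound
  obtain ⟨K1, hK10, hK1⟩ : ∃ K1 : ℝ, 0 ≤ K1 ∧ ∀ v, nm v ≤ K1 * ‖v‖ := by
    refine ⟨∑ i : Fin d, nm (Pi.single i 1), Finset.sum_nonneg fun i _ => hnm0 _, ?_⟩
    intro v
    have hsum : ∀ (s : Finset (Fin d)) (f : Fin d → Fin d → ℝ),
        nm (∑ i ∈ s, f i) ≤ ∑ i ∈ s, nm (f i) := by
      intro s f
      induction s using Finset.induction with
      | empty => simp [nm_zero]
      | insert a s hnot ih =>
        rw [Finset.sum_insert hnot, Finset.sum_insert hnot]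
        exact le_trans (hnmadd _ _) (add_le_add_right ih _)
    set g : Fin d → Fin d → ℝ := fun i => (v i) • (Pi.single i (1:ℝ) : Fin d → ℝ) with hg
    have hv : v = ∑ i : Fin d, g i := by
      funext j
      simp [hg, Finset.sum_apply, Pi.single_apply, mul_comm]
    calc nm v = nm (∑ i : Fin d, g i) := by rw [← hv]
      _ ≤ ∑ i : Fin d, nm (g i) := hsum _ _
      _ = ∑ i : Fin d, |v i| * nm (Pi.single i (1:ℝ)) := by
          simp [hg, hnmsmul]
      _ ≤ ∑ i : Fin d, ‖v‖ * nm (Pi.single i (1:ℝ)) := by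
          refine Finset.sum_le_sum fun i _ => ?_
          have h1 : |v i| ≤ ‖v‖ := by
            have := norm_le_pi_norm v i
            simpa [Real.norm_eq_abs] using this
          exact mul_le_mul_of_nonneg_right h1 (hnm0 _)
      _ = (∑ i : Fin d, nm (Pi.single i 1)) * ‖v‖ := by
          rw [Finset.sum_mul]
          exact Finset.sum_congr rfl fun i _ => mul_comm _ _
  -- nm is continuous
  have hcont : Continuous nm := by
    have hlip : LipschitzWith K1.toNNReal nm := by
      refine LipschitzWith.of_dist_le_mul fun v w => ?_
      rw [Real.dist_eq, dist_eq_norm]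
      have h1 : nm v - nm w ≤ K1 * ‖v - w‖ := by
        have := nm_sub v w
        have := hK1 (v - w)
        linarith
      have h2 : nm w - nm v ≤ K1 * ‖v - w‖ := by
        have h3 := nm_sub w v
        have h4 := hK1 (w - v)
        have h5 : ‖w - v‖ = ‖v - w‖ := by rw [← norm_neg]; ring_nf
        rw [h5] at h4
        linarith
      rw [abs_le]
      constructor
      · rw [Real.coe_toNNReal _ hK10]; linarith
      · rw [Real.coe_toNNReal _ hK10]; linarith
    exact hlip.continuous
  -- comparison with the sup norm: lower bound
  obtain ⟨ε, hε0, hε⟩ : ∃ ε : ℝ, 0 < ε ∧ ∀ v, ε * ‖v‖ ≤ nm v := by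
    have hne : (Metric.sphere (0 : Fin d → ℝ) 1).Nonempty :=
      NormedSpace.sphere_nonempty.mpr zero_le_one
    obtain ⟨u, hu, hmin⟩ := (isCompact_sphere (0 : Fin d → ℝ) 1).exists_isMinOn hne
      hcont.continuousOn
    have hu1 : ‖u‖ = 1 := by simpa using hu
    have hune : u ≠ 0 := by
      intro h
      rw [h] at hu1
      simp at hu1
    have hεpos : 0 < nm u := lt_of_le_of_ne (hnm0 u) (fun h => hune (hnmeq0 u h.symm))
    refine ⟨nm u, hεpos, ?_⟩
    intro v
    by_cases hv : v = 0
    · simp [hv, nm_zero]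
    · have hvn : 0 < ‖v‖ := norm_pos_iff.mpr hv
      have hw : (‖v‖⁻¹ • v) ∈ Metric.sphere (0 : Fin d → ℝ) 1 := by
        simp [norm_smul, abs_of_pos (inv_pos.mpr hvn), inv_mul_cancel₀ (ne_of_gt hvn)]
      have h1 : nm u ≤ nm (‖v‖⁻¹ • v) := hmin hw
      rw [hnmsmul, abs_of_pos (inv_pos.mpr hvn)] at h1
      calc nm u * ‖v‖ ≤ (‖v‖⁻¹ * nm v) * ‖v‖ :=
            mul_le_mul_of_nonneg_right h1 (le_of_lt hvn)
        _ = nm v := by field_simp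
  -- operator norm facts
  have opfacts : ∀ B : Matrix (Fin d) (Fin d) ℝ,
      0 ≤ op B ∧ ∀ v, nm (B.mulVec v) ≤ op B * nm v := by
    intro B
    set f : (Fin d → ℝ) →L[ℝ] (Fin d → ℝ) := LinearMap.toContinuousLinearMap B.mulVecLin with hf
    have hKnm : ∀ v, nm (B.mulVec v) ≤ (K1 * ‖f‖ / ε) * nm v := by
      intro v
      have h1 : nm (B.mulVec v) ≤ K1 * ‖B.mulVec v‖ := hK1 _
      have h2 : ‖B.mulVec v‖ ≤ ‖f‖ * ‖v‖ := by
        have h := f.le_opNorm v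
        have hfv : f v = B.mulVec v := rfl
        rwa [hfv] at h
      have h3 : ε * ‖v‖ ≤ nm v := hε v
      have h4 : ‖v‖ ≤ nm v / ε := by
        rw [le_div_iff₀ hε0]
        linarith
      have h5 : 0 ≤ ‖f‖ := norm_nonneg f
      calc nm (B.mulVec v) ≤ K1 * (‖f‖ * ‖v‖) := by
            refine le_trans h1 ?_
            have := mul_le_mul_of_nonneg_left h2 hK10
            linarith
        _ ≤ K1 * (‖f‖ * (nm v / ε)) := by
            have := mul_le_mul_of_nonneg_left h4 (mul_nonneg hK10 h5)
            nlinarith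
        _ = (K1 * ‖f‖ / ε) * nm v := by field_simp
    set K : ℝ := K1 * ‖f‖ / ε with hKdef
    have hK0 : 0 ≤ K := by
      have h5 : 0 ≤ ‖f‖ := norm_nonneg f
      positivity
    set S : Set ℝ := {s : ℝ | ∃ v, nm v ≤ 1 ∧ s = nm (B.mulVec v)} with hS
    have mem0 : (0:ℝ) ∈ S := by
      refine ⟨0, by simp [nm_zero], ?_⟩
      simp [Matrix.mulVec_zero, nm_zero]
    have bdd : BddAbove S := by
      refine ⟨K, ?_⟩
      rintro s ⟨v, hv, rfl⟩
      calc nm (B.mulVec v) ≤ K * nm v := hKnm v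
        _ ≤ K * 1 := by nlinarith [hnm0 v]
        _ = K := mul_one K
    have hop0 : 0 ≤ op B := by
      rw [hop]
      exact le_csSup bdd mem0
    refine ⟨hop0, ?_⟩
    intro v
    by_cases hv : v = 0
    · simp [hv, Matrix.mulVec_zero, nm_zero, hop0]
    · have hpos : 0 < nm v := lt_of_le_of_ne (hnm0 v) (fun h => hv (hnmeq0 v h.symm))
      have hu : nm ((nm v)⁻¹ • v) = 1 := by
        rw [hnmsmul, abs_of_pos (by positivity)]
        field_simp
      have hmem : nm (B.mulVec ((nm v)⁻¹ • v)) ∈ S := ⟨_, le_of_eq hu, rfl⟩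
      have hle : nm (B.mulVec ((nm v)⁻¹ • v)) ≤ op B := by
        rw [hop]; exact le_csSup bdd hmem
      have heq : nm (B.mulVec ((nm v)⁻¹ • v)) = (nm v)⁻¹ * nm (B.mulVec v) := by
        rw [Matrix.mulVec_smul, hnmsmul, abs_of_pos (by positivity)]
      rw [heq] at hle
      have h6 := mul_le_mul_of_nonneg_right hle (le_of_lt hpos)
      calc nm (B.mulVec v) = (nm v)⁻¹ * nm (B.mulVec v) * nm v := by field_simp
        _ ≤ op B * nm v := h6
  intro x y n hn
  set S : ℕ → (Fin d → ℝ) := fun m => ∑ k ∈ Finset.Icc 1 m, y k with hSdef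
  set a : ℕ → ℝ := fun m => ∑ k ∈ Finset.Icc 1 m, op (A k) with hadef
  set M : ℝ := (Finset.range (n+1)).sup' Finset.nonempty_range_add_one
      (fun m => nm (∑ k ∈ Finset.Icc 1 m, y k)) with hMdef
  have hM : ∀ m, m ≤ n → nm (S m) ≤ M := by
    intro m hm
    exact Finset.le_sup' (fun m => nm (∑ k ∈ Finset.Icc 1 m, y k))
      (Finset.mem_range.mpr (Nat.lt_succ_of_le hm))
  have hM0 : 0 ≤ M := le_trans (hnm0 (S 0)) (hM 0 (Nat.zero_le n))
  have ha0 : ∀ m, 0 ≤ a m := by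
    intro m
    exact Finset.sum_nonneg fun k _ => (opfacts (A k)).1
  have ha_succ : ∀ m, a (m+1) = a m + op (A (m+1)) := by
    intro m
    exact Finset.sum_Icc_succ_top (Nat.one_le_iff_ne_zero.mpr (Nat.succ_ne_zero m)) _
  have hS_succ : ∀ m, S (m+1) = S m + y (m+1) := by
    intro m
    exact Finset.sum_Icc_succ_top (Nat.one_le_iff_ne_zero.mpr (Nat.succ_ne_zero m)) _
  have key : ∀ m, m ≤ n →
      nm (Y x y m - S m) + M ≤ (nm x + C * a m + M) * Real.exp (c * a m) := by
    intro m
    induction m with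
    | zero =>
      intro _
      have hS0 : S 0 = 0 := by simp [hSdef]
      have ha00 : a 0 = 0 := by simp [hadef]
      rw [hS0, ha00, hY0]
      simp [nm_zero]
    | succ m ih =>
      intro hm1
      have hmn : m ≤ n := Nat.le_of_succ_le hm1
      have ihm := ih hmn
      have hmN : m < N := lt_of_lt_of_le hm1 hn
      set t := op (A (m+1)) with htdef
      have ht0 : 0 ≤ t := (opfacts (A (m+1))).1
      set b := nm (Y x y m - S m) with hbdef
      have hb0 : 0 ≤ b := hnm0 _
      have hYm : nm (Y x y m) ≤ b + M := by
        have : Y x y m = (Y x y m - S m) + S m := by abel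
        rw [this]
        exact le_trans (hnmadd _ _) (add_le_add_right (hM m hmn) _)
      have hZrec : Y x y (m+1) - S (m+1)
          = (Y x y m - S m) + (A (m+1)).mulVec (μ (Y x y m)) := by
        rw [hYrec x y m hmN, hS_succ]
        abel
      have hstep : nm (Y x y (m+1) - S (m+1)) ≤ b + t * (C + c * (b + M)) := by
        rw [hZrec]
        refine le_trans (hnmadd _ _) (add_le_add_right ?_ b)
        calc nm ((A (m+1)).mulVec (μ (Y x y m)))
            ≤ t * nm (μ (Y x y m)) := (opfacts (A (m+1))).2 _
          _ ≤ t * (C + c * nm (Y x y m)) := by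
              exact mul_le_mul_of_nonneg_left (hμ _) ht0
          _ ≤ t * (C + c * (b + M)) := by
              refine mul_le_mul_of_nonneg_left ?_ ht0
              have h1 := mul_le_mul_of_nonneg_left hYm hc
              linarith
      have hexp1 : c * t + 1 ≤ Real.exp (c * t) := Real.add_one_le_exp (c * t)
      have hexp2 : (1:ℝ) ≤ Real.exp (c * a (m+1)) :=
        Real.one_le_exp (mul_nonneg hc (ha0 _))
      have hexpmul : Real.exp (c * a (m+1)) = Real.exp (c * a m) * Real.exp (c * t) := by
        rw [ha_succ, mul_add, Real.exp_add]
      have hexp0 : (0:ℝ) < Real.exp (c * a m) := Real.exp_pos _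
      have hP0 : 0 ≤ nm x + C * a m + M := by
        have := hnm0 x
        have := ha0 m
        nlinarith
      -- arithmetic conclusion
      have hct0 : 0 ≤ 1 + c * t := by positivity
      have h1 : (b + M) * (1 + c * t) ≤ (nm x + C * a m + M) * Real.exp (c * a m) * (1 + c * t) :=
        mul_le_mul_of_nonneg_right ihm hct0
      have h2 : (nm x + C * a m + M) * Real.exp (c * a m) * (1 + c * t)
          ≤ (nm x + C * a m + M) * Real.exp (c * a (m+1)) := by
        rw [hexpmul, ← mul_assoc]
        refine mul_le_mul_of_nonneg_left ?_ (mul_nonneg hP0 hexp0.le)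
        linarith
      have h3 : C * t ≤ C * t * Real.exp (c * a (m+1)) := by
        have hCt : 0 ≤ C * t := mul_nonneg hC ht0
        nlinarith
      calc nm (Y x y (m+1) - S (m+1)) + M ≤ (b + t * (C + c * (b + M))) + M := by
            linarith [hstep]
        _ = (b + M) * (1 + c * t) + C * t - (C * t - t * C) := by ring
        _ = (b + M) * (1 + c * t) + C * t := by ring
        _ ≤ (nm x + C * a m + M) * Real.exp (c * a (m+1)) + C * t * Real.exp (c * a (m+1)) := by
            linarith
        _ = (nm x + C * a (m+1) + M) * Real.exp (c * a (m+1)) := by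
            rw [ha_succ]; ring
  have hfin := key n le_rfl
  have : nm (Y x y n) ≤ nm (Y x y n - S n) + M := by
    have h := hnmadd (Y x y n - S n) (S n)
    rw [sub_add_cancel] at h
    exact le_trans h (add_le_add_right (hM n le_rfl) _)
  exact le_trans this hfin
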